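/- Let β ∈ ℝ⁶ satisfy β₆ ≠ 0, β₆β₃ + β₄β₅ ≥ 0 and Δ₃(β) > 0. Then the set of singular points of the Killing tensor K(β), i.e. the set {x ∈ ℝ² : K¹¹(β)(x) = K²²(β)(x) and K¹²(β)(x) = 0} of points where the two eigenvalues of K(β) coincide, is exactly the two-element set {F₁(β), F₂(β)}, and F₁(β) ≠ F₂(β). -/

import Mathlib

open Real

/-- Component `K¹¹` of the general Killing two-tensor of the Euclidean plane. -/
def K11 (β : Fin 6 → ℝ) (x : ℝ × ℝ) : ℝ := β 0 + 2 * β 3 * x.2 + β 5 * x.2 ^ 2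

/-- Component `K¹² = K²¹` of the general Killing two-tensor of the Euclidean plane. -/
def K12 (β : Fin 6 → ℝ) (x : ℝ × ℝ) : ℝ := β 2 - β 3 * x.1 - β 4 * x.2 - β 5 * x.1 * x.2

/-- Component `K²²` of the general Killing two-tensor of the Euclidean plane. -/
def K22 (β : Fin 6 → ℝ) (x : ℝ × ℝ) : ℝ := β 1 + 2 * β 4 * x.1 + β 5 * x.1 ^ 2

/-- The invariant `Δ₃(β) = (β₆(β₁−β₂) − β₄² + β₅²)² + 4(β₆β₃ + β₄β₅)²`. -/
def Delta3 (β : Fin 6 → ℝ) : ℝ :=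
  (β 5 * (β 0 - β 1) - (β 3) ^ 2 + (β 4) ^ 2) ^ 2 + 4 * (β 5 * β 2 + β 3 * β 4) ^ 2

/-- `σ(β) = β₄² − β₅² + β₆(β₂−β₁)`. -/
def sigma (β : Fin 6 → ℝ) : ℝ := (β 3) ^ 2 - (β 4) ^ 2 + β 5 * (β 1 - β 0)

/-- The first focus of the elliptic-hyperbolic web generated by `K(β)`. -/
noncomputable def F1 (β : Fin 6 → ℝ) : ℝ × ℝ :=
  (-(β 4) / β 5 + (1 / β 5) * Real.sqrt ((Real.sqrt (Delta3 β) - sigma β) / 2),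
   -(β 3) / β 5 + (1 / β 5) * Real.sqrt ((Real.sqrt (Delta3 β) + sigma β) / 2))

/-- The second focus of the elliptic-hyperbolic web generated by `K(β)`. -/
noncomputable def F2 (β : Fin 6 → ℝ) : ℝ × ℝ :=
  (-(β 4) / β 5 - (1 / β 5) * Real.sqrt ((Real.sqrt (Delta3 β) - sigma β) / 2),
   -(β 3) / β 5 - (1 / β 5) * Real.sqrt ((Real.sqrt (Delta3 β) + sigma β) / 2))

/-- Sign bookkeeping: if `p² = A²`, `q² = B²` and `pq = AB` with `A, B ≥ 0`,
then `(p,q) = (A,B)` or `(p,q) = (-A,-B)`. -/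
lemma sign_lemma (A B p q : ℝ) (hA0 : 0 ≤ A) (hB0 : 0 ≤ B)
    (hp : p ^ 2 = A ^ 2) (hq : q ^ 2 = B ^ 2) (hpq : p * q = A * B) :
    (p = A ∧ q = B) ∨ (p = -A ∧ q = -B) := by
  have hpA : p = A ∨ p = -A := by
    have h : (p - A) * (p + A) = 0 := by linear_combination hp
    rcases mul_eq_zero.mp h with h' | h'
    · exact Or.inl (by linarith)
    · exact Or.inr (by linarith)
  have hqB : q = B ∨ q = -B := by
    have h : (q - B) * (q + B) = 0 := by linear_combination hq
    rcases mul_eq_zero.mp h with h' | h'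
    · exact Or.inl (by linarith)
    · exact Or.inr (by linarith)
  rcases hpA with hp' | hp' <;> rcases hqB with hq' | hq'
  · exact Or.inl ⟨hp', hq'⟩
  · -- p = A, q = -B ⇒ A*B = 0
    have hAB0 : A * B = 0 := by nlinarith [hpq, hp', hq']
    rcases mul_eq_zero.mp hAB0 with h' | h'
    · exact Or.inr ⟨by rw [hp', h']; ring, hq'⟩
    · exact Or.inl ⟨hp', by rw [hq', h']; ring⟩
  · -- p = -A, q = B ⇒ A*B = 0
    have hAB0 : A * B = 0 := by nlinarith [hpq, hp', hq']
    rcases mul_eq_zero.mp hAB0 with h' | h'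
    · exact Or.inl ⟨by rw [hp', h']; ring, hq'⟩
    · exact Or.inr ⟨hp', by rw [hq', h']; ring⟩
  · exact Or.inr ⟨hp', hq'⟩

/-- For a nondegenerate Killing tensor `K(β)` of the Euclidean plane (with
`β₆ ≠ 0`, `β₆β₃ + β₄β₅ ≥ 0` and `Δ₃(β) > 0`), the set of singular points of the
coordinate web, i.e. points where the two eigenvalues of `K(β)` coincide, is
exactly the two-element set consisting of the foci `F₁(β) ≠ F₂(β)`. -/
theorem singular_points_eq_foci
    (β : Fin 6 → ℝ) (h6 : β 5 ≠ 0) (hcross : β 5 * β 2 + β 3 * β 4 ≥ 0)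
    (h3 : Delta3 β > 0) :
    {x : ℝ × ℝ | K11 β x = K22 β x ∧ K12 β x = 0} = {F1 β, F2 β} ∧ F1 β ≠ F2 β := by
  have hσ2 : Delta3 β = (sigma β) ^ 2 + 4 * (β 5 * β 2 + β 3 * β 4) ^ 2 := by
    unfold Delta3 sigma; ring
  have hs0 : 0 < Real.sqrt (Delta3 β) := Real.sqrt_pos.mpr h3
  have hss : Real.sqrt (Delta3 β) ^ 2 = Delta3 β := Real.sq_sqrt h3.le
  set s := Real.sqrt (Delta3 β) with hsdef
  have habs : |sigma β| ≤ s := by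
    rw [← Real.sqrt_sq_eq_abs]
    exact Real.sqrt_le_sqrt (by nlinarith [sq_nonneg (β 5 * β 2 + β 3 * β 4)])
  have habs' := abs_le.mp habs
  have h1 : 0 ≤ (s - sigma β) / 2 := by linarith [habs'.2]
  have h2 : 0 ≤ (s + sigma β) / 2 := by linarith [habs'.1]
  set A := Real.sqrt ((s - sigma β) / 2) with hAdef
  set B := Real.sqrt ((s + sigma β) / 2) with hBdef
  have hA0 : 0 ≤ A := Real.sqrt_nonneg _
  have hB0 : 0 ≤ B := Real.sqrt_nonneg _
  have hA : A ^ 2 = (s - sigma β) / 2 := Real.sq_sqrt h1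
  have hB : B ^ 2 = (s + sigma β) / 2 := Real.sq_sqrt h2
  have hABsq : (A * B) ^ 2 = (β 5 * β 2 + β 3 * β 4) ^ 2 := by
    have h' : (A * B) ^ 2 = A ^ 2 * B ^ 2 := by ring
    rw [h', hA, hB]
    nlinarith [hss, hσ2]
  have hAB : A * B = β 5 * β 2 + β 3 * β 4 := by
    have h' : (A * B - (β 5 * β 2 + β 3 * β 4)) * (A * B + (β 5 * β 2 + β 3 * β 4)) = 0 := by
      linear_combination hABsq
    rcases mul_eq_zero.mp h' with h'' | h''
    · linarith
    · have := mul_nonneg hA0 hB0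
      linarith
  have hsum : A ^ 2 + B ^ 2 = s := by rw [hA, hB]; ring
  -- unfold sigma in hA hB
  unfold sigma at hA hB
  constructor
  · ext x
    obtain ⟨x1, x2⟩ := x
    simp only [Set.mem_setOf_eq, Set.mem_insert_iff, Set.mem_singleton_iff, K11, K12, K22,
      F1, F2, ← hsdef, ← hAdef, ← hBdef, Prod.mk.injEq]
    constructor
    · rintro ⟨he1, he2⟩
      have hq2 : (β 5 * x2 + β 3) ^ 2 - (β 5 * x1 + β 4) ^ 2
          = (β 3) ^ 2 - (β 4) ^ 2 + β 5 * (β 1 - β 0) := by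
        linear_combination β 5 * he1
      have hpq : (β 5 * x1 + β 4) * (β 5 * x2 + β 3) = β 5 * β 2 + β 3 * β 4 := by
        linear_combination (-(β 5)) * he2
      have h1' : (β 5 * x2 + β 3) ^ 2 - (β 5 * x1 + β 4) ^ 2 = B ^ 2 - A ^ 2 := by
        rw [hA, hB]; linarith [hq2]
      have h2' : ((β 5 * x1 + β 4) * (β 5 * x2 + β 3)) ^ 2 = (A * B) ^ 2 := by
        rw [hAB, hpq]
      have key : ((β 5 * x2 + β 3) ^ 2 - B ^ 2) * ((β 5 * x2 + β 3) ^ 2 + A ^ 2) = 0 := by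
        linear_combination (β 5 * x2 + β 3) ^ 2 * h1' + h2'
      have hq2' : (β 5 * x2 + β 3) ^ 2 = B ^ 2 := by
        rcases mul_eq_zero.mp key with h' | h'
        · linarith
        · exfalso
          linarith [sq_nonneg (β 5 * x2 + β 3), sq_nonneg (β 5 * x1 + β 4), sq_nonneg A,
            hA, hq2, hs0, h']
      have hp2' : (β 5 * x1 + β 4) ^ 2 = A ^ 2 := by
        rw [hA]; rw [hB] at hq2'; linarith [hq2]
      have hpq' : (β 5 * x1 + β 4) * (β 5 * x2 + β 3) = A * B := by rw [hAB]; exact hpq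
      rcases sign_lemma A B (β 5 * x1 + β 4) (β 5 * x2 + β 3) hA0 hB0 hp2' hq2' hpq' with
        ⟨ha, hb⟩ | ⟨ha, hb⟩
      · left
        constructor
        · field_simp
          linear_combination ha
        · field_simp
          linear_combination hb
      · right
        constructor
        · field_simp
          linear_combination ha
        · field_simp
          linear_combination hb
    · rintro (⟨h1', h2'⟩ | ⟨h1', h2'⟩)
      · have hp' : β 5 * x1 + β 4 = A := by rw [h1']; field_simp; ring
        have hq' : β 5 * x2 + β 3 = B := by rw [h2']; field_simp; ring
        constructor
        · apply mul_left_cancel₀ h6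
          linear_combination (β 5 * x2 + β 3 + B) * hq' - (β 5 * x1 + β 4 + A) * hp' + hB - hA
        · apply mul_left_cancel₀ h6
          linear_combination (-(β 5 * x2 + β 3)) * hp' - A * hq' - hAB
      · have hp' : β 5 * x1 + β 4 = -A := by rw [h1']; field_simp; ring
        have hq' : β 5 * x2 + β 3 = -B := by rw [h2']; field_simp; ring
        constructor
        · apply mul_left_cancel₀ h6
          linear_combination (β 5 * x2 + β 3 - B) * hq' - (β 5 * x1 + β 4 - A) * hp' + hB - hA
        · apply mul_left_cancel₀ h6
          linear_combination (-(β 5 * x2 + β 3)) * hp' + A * hq' - hAB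
  · intro h
    have h1' := congrArg Prod.fst h
    have h2' := congrArg Prod.snd h
    simp only [F1, F2, ← hsdef, ← hAdef, ← hBdef] at h1' h2'
    have hA0' : A = 0 := by
      field_simp at h1'
      have h0 : A * β 5 = 0 := by rw [show A = 0 by linarith]; ring
      rcases mul_eq_zero.mp h0 with h' | h'
      · exact h'
      · exact absurd h' h6
    have hB0' : B = 0 := by
      field_simp at h2'
      have h0 : B * β 5 = 0 := by rw [show B = 0 by linarith]; ring
      rcases mul_eq_zero.mp h0 with h' | h'
      · exact h'
      · exact absurd h' h6
    rw [hA0', hB0'] at hsum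
    norm_num at hsum
    linarith
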